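/- Let $D \in \mathbb{N}$, $D \ge 1$, and let $\Theta : [-1,1]^D \to [-1,1]$ be Lipschitz continuous with Lipschitz constant $K$ (with respect to the Euclidean norm on $[-1,1]^D$). Fix bit lengths $n_a \le n_a'$ for $a = 1,\dots,D$. Let $U'$ be the diagonal matrix on $\mathbb{C}^{\mathbb{F}_2^{n_1'} \times \cdots \times \mathbb{F}_2^{n_D'}}$ whose diagonal entry at index $(x_1',\dots,x_D')$ is $e^{i\pi \Theta(\overline{x_1'},\dots,\overline{x_D'})}$, and let $V$ be the diagonal matrix on the same space whose diagonal entry at $(x_1',\dots,x_D')$ is $e^{i\pi \Theta(\overline{x_1},\dots,\overline{x_D})}$, where $x_a \in \mathbb{F}_2^{n_a}$ consists of the first $n_a$ bits of $x_a'$. Then the $\ell^2$ operator norm satisfies $\|U' - V\| \le 2\pi K \sqrt{\sum_{a=1}^D 4^{-n_a}}$. -/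

import Mathlib

open scoped Matrix.Norms.L2Operator

/-- The signed dyadic value of a bitstring `x ∈ 𝔽₂^n`:
`x̄ = -x₀ + ∑_{a=1}^{n-1} x_a 2^{-a} ∈ [-1, 1)`. -/
noncomputable def barVal {n : ℕ} (x : Fin n → Bool) : ℝ :=
  ∑ a : Fin n, if x a then (if (a : ℕ) = 0 then -1 else (2 : ℝ) ^ (-(a : ℕ) : ℤ)) else 0

/-- The cube `[-1,1]^D` in Euclidean space. -/
def unitBox (D : ℕ) : Set (EuclideanSpace ℝ (Fin D)) :=
  (WithLp.equiv 2 (Fin D → ℝ)) ⁻¹' Set.univ.pi fun _ => Set.Icc (-1 : ℝ) 1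

section Aux

open Matrix

lemma exp_I_lip (s t : ℝ) :
    ‖Complex.exp (s * Complex.I) - Complex.exp (t * Complex.I)‖ ≤ |s - t| := by
  have hd : ∀ r : ℝ, HasDerivAt (fun r : ℝ => Complex.exp (r * Complex.I))
      (Complex.exp (r * Complex.I) * Complex.I) r := by
    intro r
    have h1 : HasDerivAt (fun r : ℝ => (r : ℂ) * Complex.I) Complex.I r := by
      simpa using (Complex.ofRealCLM.hasDerivAt (x := r)).mul_const Complex.I
    exact h1.cexp
  have hlip : LipschitzWith 1 (fun r : ℝ => Complex.exp (r * Complex.I)) := by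
    apply lipschitzWith_of_nnnorm_deriv_le (fun r => (hd r).differentiableAt)
    intro x
    rw [(hd x).deriv]
    simp [← NNReal.coe_le_coe, Complex.norm_exp]
  simpa [dist_eq_norm, Real.dist_eq] using hlip.dist_le_mul s t

lemma l2_opNorm_diagonal_le {m : Type*} [Fintype m] [DecidableEq m] (d : m → ℂ)
    {C : ℝ} (hC : 0 ≤ C) (h : ∀ i, ‖d i‖ ≤ C) : ‖Matrix.diagonal d‖ ≤ C := by
  rw [Matrix.l2_opNorm_def]
  refine ContinuousLinearMap.opNorm_le_bound _ hC fun x => ?_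
  have : (LinearEquiv.trans Matrix.toEuclideanLin LinearMap.toContinuousLinearMap
      (Matrix.diagonal d)) x =
      (WithLp.equiv 2 (m → ℂ)).symm ((Matrix.diagonal d) *ᵥ (WithLp.equiv 2 (m → ℂ)) x) := rfl
  rw [this]
  rw [EuclideanSpace.norm_eq, EuclideanSpace.norm_eq]
  rw [← Real.sqrt_sq hC, ← Real.sqrt_mul (sq_nonneg C)]
  apply Real.sqrt_le_sqrt
  rw [Finset.mul_sum]
  apply Finset.sum_le_sum
  intro i _
  have hi : (WithLp.equiv 2 (m → ℂ)).symm ((Matrix.diagonal d) *ᵥ (WithLp.equiv 2 (m → ℂ)) x) i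
      = d i * x i := by
    simp [Matrix.mulVec_diagonal]
  rw [hi, norm_mul, mul_pow]
  gcongr
  exact h i

lemma sum_two_zpow_le (m : ℕ) : ∑ a ∈ Finset.range m, (2:ℝ) ^ (-(a:ℤ)) ≤ 2 := by
  have h := sum_geometric_two_le m
  have e : ∀ a ∈ Finset.range m, (2:ℝ) ^ (-(a:ℤ)) = (1/2:ℝ) ^ a := by
    intro a _
    rw [one_div, inv_pow, ← zpow_natCast, ← _root_.zpow_neg]
  rw [Finset.sum_congr rfl e]
  exact h

lemma barVal_mem_Icc {n : ℕ} (hn : 1 ≤ n) (x : Fin n → Bool) :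
    barVal x ∈ Set.Icc (-1:ℝ) 1 := by
  obtain ⟨m, rfl⟩ : ∃ m, n = m + 1 := ⟨n - 1, (Nat.succ_pred_eq_of_pos hn).symm⟩
  rw [barVal, Fin.sum_univ_succ]
  have hrest : ∀ a : Fin m,
      (if x a.succ then (if ((a.succ : Fin (m+1)) : ℕ) = 0 then -1 else
        (2 : ℝ) ^ (-((a.succ : Fin (m+1)) : ℕ) : ℤ)) else 0)
      = (if x a.succ then (2 : ℝ) ^ (-((a:ℕ)+1) : ℤ) else 0) := by
    intro a
    simp [Fin.val_succ]
  rw [Finset.sum_congr rfl (fun a _ => hrest a)]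
  have hsum : ∑ a : Fin m, (2 : ℝ) ^ (-((a:ℕ)+1) : ℤ) ≤ 1 := by
    have : ∀ a : Fin m, (2 : ℝ) ^ (-((a:ℕ)+1) : ℤ) = (1/2) * (2:ℝ) ^ (-(a:ℕ) : ℤ) := by
      intro a
      rw [show (-((a:ℕ)+1) : ℤ) = (-(a:ℕ)) + (-1) by ring, zpow_add₀ (two_ne_zero)]
      ring
    rw [Finset.sum_congr rfl (fun a _ => this a), ← Finset.mul_sum]
    have := sum_two_zpow_le m
    rw [Fin.sum_univ_eq_sum_range (fun a => (2:ℝ) ^ (-(a:ℤ)))]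
    linarith
  have hlb : (0:ℝ) ≤ ∑ a : Fin m, (if x a.succ then (2 : ℝ) ^ (-((a:ℕ)+1) : ℤ) else 0) :=
    Finset.sum_nonneg fun a _ => by positivity
  have hub : ∑ a : Fin m, (if x a.succ then (2 : ℝ) ^ (-((a:ℕ)+1) : ℤ) else 0)
      ≤ ∑ a : Fin m, (2 : ℝ) ^ (-((a:ℕ)+1) : ℤ) := by
    apply Finset.sum_le_sum
    intro a _
    split
    · exact le_rfl
    · positivity
  have h0 : (if x 0 then (if ((0 : Fin (m+1)) : ℕ) = 0 then -1 else
      (2 : ℝ) ^ (-((0 : Fin (m+1)) : ℕ) : ℤ)) else 0) ∈ Set.Icc (-1:ℝ) 0 := by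
    simp only [Fin.val_zero, if_pos rfl]
    split <;> norm_num
  constructor <;> [linarith [h0.1]; linarith [h0.2, hsum]]

lemma barVal_trunc {n n' : ℕ} (h1 : 1 ≤ n) (h : n ≤ n') (x : Fin n' → Bool) :
    |barVal x - barVal (fun i : Fin n => x (Fin.castLE h i))| ≤ 2 * (2:ℝ) ^ (-(n:ℤ)) := by
  set F : ℕ → ℝ := fun a => if ha : a < n' then
      (if x ⟨a, ha⟩ then (if a = 0 then -1 else (2 : ℝ) ^ (-(a:ℤ))) else 0) else 0 with hF
  have e1 : barVal x = ∑ a ∈ Finset.range n', F a := by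
    rw [barVal, Finset.sum_range]
    refine Finset.sum_congr rfl fun a _ => ?_
    simp [hF, a.isLt]
  have e2 : barVal (fun i : Fin n => x (Fin.castLE h i)) = ∑ a ∈ Finset.range n, F a := by
    rw [barVal, Finset.sum_range]
    refine Finset.sum_congr rfl fun a _ => ?_
    have ha : (a : ℕ) < n' := lt_of_lt_of_le a.isLt h
    simp only [hF, dif_pos ha]
    rfl
  rw [e1, e2, ← Finset.sum_Ico_eq_sub _ h]
  calc |∑ a ∈ Finset.Ico n n', F a| ≤ ∑ a ∈ Finset.Ico n n', |F a| :=
        Finset.abs_sum_le_sum_abs _ _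
    _ ≤ ∑ a ∈ Finset.Ico n n', (2:ℝ) ^ (-(a:ℤ)) := by
        apply Finset.sum_le_sum
        intro a ha
        have han : a ≠ 0 := by
          have := (Finset.mem_Ico.mp ha).1; omega
        have hpos : (0:ℝ) ≤ (2:ℝ) ^ (-(a:ℤ)) := by positivity
        simp only [hF, han, if_false]
        split
        · split
          · rw [abs_of_nonneg hpos]
          · simpa using hpos
        · simpa using hpos
    _ ≤ 2 * (2:ℝ) ^ (-(n:ℤ)) := by
        rw [Finset.sum_Ico_eq_sum_range]
        have : ∀ j ∈ Finset.range (n' - n), (2:ℝ) ^ (-((n + j : ℕ):ℤ)) =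
            (2:ℝ) ^ (-(n:ℤ)) * (2:ℝ) ^ (-(j:ℤ)) := by
          intro j _
          rw [← zpow_add₀ (two_ne_zero : (2:ℝ) ≠ 0)]
          congr 1; push_cast; ring
        rw [Finset.sum_congr rfl this, ← Finset.mul_sum]
        have := sum_two_zpow_le (n' - n)
        have h2 : (0:ℝ) ≤ (2:ℝ) ^ (-(n:ℤ)) := by positivity
        nlinarith

end Aux

/-- Truncation stability of the diagonal phase unitary of a Lipschitz function:
if `Θ : [-1,1]^D → [-1,1]` is `K`-Lipschitz (Euclidean norm), `U'` is the
diagonal matrix with entries `e^{iπΘ(x̄'_1,…,x̄'_D)}` and `V` the one whose entry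
at `x'` uses the truncations `x_a` of `x'_a` to the first `n_a ≤ n'_a` bits, then
`‖U' - V‖ ≤ 2πK √(∑_a 4^{-n_a})` in ℓ² operator norm. -/
theorem diagonal_unitary_truncation_bound (D : ℕ) (hD : 1 ≤ D)
    (Θ : EuclideanSpace ℝ (Fin D) → ℝ) (K : NNReal)
    (hLip : LipschitzOnWith K Θ (unitBox D))
    (hmap : Set.MapsTo Θ (unitBox D) (Set.Icc (-1 : ℝ) 1))
    (n n' : Fin D → ℕ) (hn : ∀ a, 1 ≤ n a) (hnn' : ∀ a, n a ≤ n' a)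
    (U' V : Matrix (∀ a : Fin D, Fin (n' a) → Bool)
      (∀ a : Fin D, Fin (n' a) → Bool) ℂ)
    (hU' : U' = Matrix.diagonal fun x =>
      Complex.exp ((Real.pi : ℂ) * Complex.I *
        ((Θ ((WithLp.equiv 2 (Fin D → ℝ)).symm fun a => barVal (x a)) : ℝ) : ℂ)))
    (hV : V = Matrix.diagonal fun x =>
      Complex.exp ((Real.pi : ℂ) * Complex.I *
        ((Θ ((WithLp.equiv 2 (Fin D → ℝ)).symm fun a =>
          barVal fun i : Fin (n a) => x a (Fin.castLE (hnn' a) i)) : ℝ) : ℂ))) :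
    ‖U' - V‖ ≤ 2 * Real.pi * (K : ℝ) *
      Real.sqrt (∑ a : Fin D, (4 : ℝ) ^ (-(n a : ℕ) : ℤ)) := by
  subst hU' hV
  rw [Matrix.diagonal_sub]
  set S : ℝ := ∑ a : Fin D, (4 : ℝ) ^ (-(n a : ℕ) : ℤ) with hS
  have hS0 : 0 ≤ S := Finset.sum_nonneg fun a _ => by positivity
  have hC0 : 0 ≤ 2 * Real.pi * (K : ℝ) * Real.sqrt S := by positivity
  apply l2_opNorm_diagonal_le _ hC0
  intro x
  set v' : EuclideanSpace ℝ (Fin D) :=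
    (WithLp.equiv 2 (Fin D → ℝ)).symm fun a => barVal (x a) with hv'
  set v : EuclideanSpace ℝ (Fin D) :=
    (WithLp.equiv 2 (Fin D → ℝ)).symm fun a =>
      barVal fun i : Fin (n a) => x a (Fin.castLE (hnn' a) i) with hv
  have hv'mem : v' ∈ unitBox D := by
    rw [unitBox, Set.mem_preimage, Set.mem_univ_pi]
    intro a
    exact barVal_mem_Icc (le_trans (hn a) (hnn' a)) _
  have hvmem : v ∈ unitBox D := by
    rw [unitBox, Set.mem_preimage, Set.mem_univ_pi]
    intro a
    exact barVal_mem_Icc (hn a) _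
  -- rewrite the entries in the form `exp (s * I)`
  have hform : ∀ θ : ℝ, (Real.pi : ℂ) * Complex.I * (θ : ℂ) =
      ((Real.pi * θ : ℝ) : ℂ) * Complex.I := by
    intro θ; push_cast; ring
  rw [hform, hform]
  have key := exp_I_lip (Real.pi * Θ v') (Real.pi * Θ v)
  have h1 : |Real.pi * Θ v' - Real.pi * Θ v| = Real.pi * |Θ v' - Θ v| := by
    rw [← mul_sub, abs_mul, abs_of_nonneg Real.pi_pos.le]
  have h2 : |Θ v' - Θ v| ≤ (K : ℝ) * dist v' v := by
    have := hLip.dist_le_mul v' hv'mem v hvmem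
    rwa [Real.dist_eq] at this
  have h3 : dist v' v ≤ 2 * Real.sqrt S := by
    rw [EuclideanSpace.dist_eq]
    have hb : ∀ a : Fin D, dist (v' a) (v a) ^ 2 ≤ 4 * (4 : ℝ) ^ (-(n a : ℕ) : ℤ) := by
      intro a
      have hd : dist (v' a) (v a) ≤ 2 * (2:ℝ) ^ (-(n a : ℕ) : ℤ) := by
        rw [Real.dist_eq]
        exact barVal_trunc (hn a) (hnn' a) (x a)
      have hdn : 0 ≤ dist (v' a) (v a) := dist_nonneg
      have hsq : (2 * (2:ℝ) ^ (-(n a : ℕ) : ℤ)) ^ 2 = 4 * (4 : ℝ) ^ (-(n a : ℕ) : ℤ) := by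
        have h4 : ((2:ℝ) ^ (-(n a : ℕ) : ℤ)) ^ 2 = (4 : ℝ) ^ (-(n a : ℕ) : ℤ) := by
          rw [sq, ← mul_zpow]; norm_num
        rw [mul_pow, h4]; norm_num
      calc dist (v' a) (v a) ^ 2 ≤ (2 * (2:ℝ) ^ (-(n a : ℕ) : ℤ)) ^ 2 := by
            apply pow_le_pow_left₀ hdn hd
        _ = 4 * (4 : ℝ) ^ (-(n a : ℕ) : ℤ) := hsq
    calc Real.sqrt (∑ a : Fin D, dist (v' a) (v a) ^ 2)
        ≤ Real.sqrt (∑ a : Fin D, 4 * (4 : ℝ) ^ (-(n a : ℕ) : ℤ)) := by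
          apply Real.sqrt_le_sqrt
          exact Finset.sum_le_sum fun a _ => hb a
      _ = 2 * Real.sqrt S := by
          rw [← Finset.mul_sum, ← hS, Real.sqrt_mul (by norm_num : (0:ℝ) ≤ 4),
            show (4:ℝ) = 2^2 by norm_num, Real.sqrt_sq (by norm_num : (0:ℝ) ≤ 2)]
  calc ‖Complex.exp (((Real.pi * Θ v' : ℝ) : ℂ) * Complex.I)
        - Complex.exp (((Real.pi * Θ v : ℝ) : ℂ) * Complex.I)‖
      ≤ |Real.pi * Θ v' - Real.pi * Θ v| := key
    _ = Real.pi * |Θ v' - Θ v| := h1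
    _ ≤ Real.pi * ((K : ℝ) * (2 * Real.sqrt S)) := by
        have := mul_le_mul h2 (le_refl (1:ℝ)) zero_le_one (by positivity)
        apply mul_le_mul_of_nonneg_left _ Real.pi_pos.le
        calc |Θ v' - Θ v| ≤ (K : ℝ) * dist v' v := h2
          _ ≤ (K : ℝ) * (2 * Real.sqrt S) := by
              apply mul_le_mul_of_nonneg_left h3 K.coe_nonneg
    _ = 2 * Real.pi * (K : ℝ) * Real.sqrt S := by ring
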